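/- (Cassini's identity for bicomplex Pell–Lucas numbers) For every integer n, BPL(n−1)·BPL(n+1) − BPL(n)² = 96·(−1)^{n+1}·(j + ij). -/

import Mathlib

open scoped TensorProduct

noncomputable def bi : ℂ ⊗[ℝ] ℂ := Complex.I ⊗ₜ[ℝ] 1
noncomputable def bj : ℂ ⊗[ℝ] ℂ := (1 : ℂ) ⊗ₜ[ℝ] Complex.I
noncomputable def bij : ℂ ⊗[ℝ] ℂ := Complex.I ⊗ₜ[ℝ] Complex.I

/-- The bicomplex Pell-Lucas number `BPL n = Q n + Q (n+1) i + Q (n+2) j + Q (n+3) ij`. -/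
noncomputable def BPL (Q : ℤ → ℤ) (n : ℤ) : ℂ ⊗[ℝ] ℂ :=
  (Q n : ℝ) • (1 : ℂ ⊗[ℝ] ℂ) + (Q (n + 1) : ℝ) • bi + (Q (n + 2) : ℝ) • bj +
    (Q (n + 3) : ℝ) • bij

/-- Cassini's identity for Pell–Lucas numbers, real-valued form. -/
lemma pellLucas_cassini_real (Q : ℤ → ℤ)
    (hQ : ∀ n : ℤ, Q (n + 2) = 2 * Q (n + 1) + Q n) (hQ0 : Q 0 = 2) (hQ1 : Q 1 = 2) :
    ∀ m : ℤ, (Q (m - 1) : ℝ) * (Q (m + 1) : ℝ) - (Q m : ℝ) ^ 2 = 8 * (-1 : ℝ) ^ (m + 1) := by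
  have hq : ∀ m : ℤ, (Q (m + 2) : ℝ) = 2 * (Q (m + 1) : ℝ) + (Q m : ℝ) := fun m => by
    exact_mod_cast hQ m
  have step : ∀ m : ℤ, (Q (m - 1) : ℝ) * (Q (m + 1) : ℝ) - (Q m : ℝ) ^ 2 =
      -((Q m : ℝ) * (Q (m + 2) : ℝ) - (Q (m + 1) : ℝ) ^ 2) := by
    intro m
    have r1 := hq m
    have r0 : (Q (m + 1) : ℝ) = 2 * (Q m : ℝ) + (Q (m - 1) : ℝ) := by
      have := hq (m - 1)
      rw [show m - 1 + 2 = m + 1 by ring, show m - 1 + 1 = m by ring] at this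
      exact this
    linear_combination (Q m : ℝ) * r1 - (Q (m + 1) : ℝ) * r0
  intro m
  induction m using Int.induction_on with
  | zero =>
    have hm1 : Q (-1) = -2 := by have := hQ (-1); norm_num at this; omega
    norm_num [hm1, hQ0, hQ1]
  | succ i ih =>
    have hs : ((-1 : ℝ)) ^ ((i : ℤ) + 1 + 1) = -((-1 : ℝ)) ^ ((i : ℤ) + 1) := by
      rw [zpow_add_one₀ (by norm_num : (-1 : ℝ) ≠ 0)]; ring
    have st := step (i : ℤ)
    rw [show (i : ℤ) + 1 - 1 = (i : ℤ) by ring, hs,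
      show (i : ℤ) + 1 + 1 = (i : ℤ) + 2 by ring]
    linear_combination st - ih
  | pred i ih =>
    have hs : ((-1 : ℝ)) ^ (-(i : ℤ) + 1) = -((-1 : ℝ)) ^ (-(i : ℤ)) := by
      rw [zpow_add_one₀ (by norm_num : (-1 : ℝ) ≠ 0)]; ring
    have st := step (-(i : ℤ) - 1)
    rw [show -(i : ℤ) - 1 + 2 = -(i : ℤ) + 1 by ring,
      show -(i : ℤ) - 1 + 1 = -(i : ℤ) by ring,
      show -(i : ℤ) - 1 - 1 = -(i : ℤ) - 2 by ring] at st
    rw [hs] at ih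
    rw [show -(i : ℤ) - 1 - 1 = -(i : ℤ) - 2 by ring,
      show -(i : ℤ) - 1 + 1 = -(i : ℤ) by ring]
    linear_combination st - ih

theorem bicomplexPellLucas_cassini (Q : ℤ → ℤ)
    (hQ : ∀ n : ℤ, Q (n + 2) = 2 * Q (n + 1) + Q n) (hQ0 : Q 0 = 2) (hQ1 : Q 1 = 2)
    (n : ℤ) :
    BPL Q (n - 1) * BPL Q (n + 1) - BPL Q n ^ 2 =
      (96 * (-1 : ℝ) ^ (n + 1)) • (bj + bij) := by
  have hq : ∀ m : ℤ, (Q (m + 2) : ℝ) = 2 * (Q (m + 1) : ℝ) + (Q m : ℝ) := fun m => by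
    exact_mod_cast hQ m
  set t : ℝ := (-1 : ℝ) ^ (n + 1) with ht
  have K : (Q (n - 1) : ℝ) * (Q (n + 1) : ℝ) - (Q n : ℝ) ^ 2 = 8 * t :=
    pellLucas_cassini_real Q hQ hQ0 hQ1 n
  -- recurrence at the four needed spots, with normalized indices
  have Rm1 : (Q (n + 1) : ℝ) = 2 * (Q n : ℝ) + (Q (n - 1) : ℝ) := by
    have := hq (n - 1)
    rw [show n - 1 + 2 = n + 1 by ring, show n - 1 + 1 = n by ring] at this
    exact this
  have R0 : (Q (n + 2) : ℝ) = 2 * (Q (n + 1) : ℝ) + (Q n : ℝ) := hq n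
  have R1 : (Q (n + 3) : ℝ) = 2 * (Q (n + 2) : ℝ) + (Q (n + 1) : ℝ) := by
    have := hq (n + 1)
    rw [show n + 1 + 2 = n + 3 by ring, show n + 1 + 1 = n + 2 by ring] at this
    exact this
  have R2 : (Q (n + 4) : ℝ) = 2 * (Q (n + 3) : ℝ) + (Q (n + 2) : ℝ) := by
    have := hq (n + 2)
    rw [show n + 2 + 2 = n + 4 by ring, show n + 2 + 1 = n + 3 by ring] at this
    exact this
  -- abbreviations for the eight values involved
  set m1 := (Q (n - 1) : ℝ)
  set q0 := (Q n : ℝ)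
  set q1 := (Q (n + 1) : ℝ)
  set q2 := (Q (n + 2) : ℝ)
  set q3 := (Q (n + 3) : ℝ)
  set q4 := (Q (n + 4) : ℝ)
  -- the four real coefficient identities
  have h1 : m1 * q1 - q0 * q2 - q1 * q3 + q2 * q4 -
      (q0 ^ 2 - q1 ^ 2 - q2 ^ 2 + q3 ^ 2) = 0 := by
    linear_combination (-q1) * Rm1 + (q0 + 2 * q2) * R0 + (-2 * q1 - q3) * R1 + q2 * R2
  have h2 : m1 * q2 + q0 * q1 - q1 * q4 - q2 * q3 -
      (2 * (q0 * q1) - 2 * (q2 * q3)) = 0 := by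
    linear_combination (-q0 - 2 * q1) * Rm1 + (m1 + 2 * q0 + 2 * q2) * R0 +
      (-2 * q1 + q2) * R1 + (-q1) * R2
  have h3 : m1 * q3 + q1 * q1 - q0 * q4 - q2 * q2 -
      (2 * (q0 * q2) - 2 * (q1 * q3)) = 96 * t := by
    linear_combination (-2 * q0 + 7 * q1) * Rm1 + (2 * m1 - 8 * q0 + 2 * q1 - q2) * R0 +
      (m1 - 2 * q0 + 2 * q1) * R1 + (-q0) * R2 + 12 * K
  have h4 : m1 * q4 + q2 * q1 + q0 * q3 + q1 * q2 -
      (2 * (q0 * q3) + 2 * (q1 * q2)) = 96 * t := by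
    linear_combination (-5 * q0) * Rm1 + (5 * m1 - 2 * q0) * R0 + (2 * m1 - q0) * R1 +
      m1 * R2 + 12 * K
  -- products of the bicomplex units
  have hx : bi * bi = -1 := by
    rw [bi, Algebra.TensorProduct.tmul_mul_tmul, Complex.I_mul_I, one_mul,
      Algebra.TensorProduct.one_def]
    rw [TensorProduct.neg_tmul]
  have hy : bj * bj = -1 := by
    rw [bj, Algebra.TensorProduct.tmul_mul_tmul, Complex.I_mul_I, one_mul,
      Algebra.TensorProduct.one_def]
    rw [TensorProduct.tmul_neg]
  have hxy : bi * bj = bij := by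
    rw [bi, bj, bij, Algebra.TensorProduct.tmul_mul_tmul, one_mul, mul_one]
  -- move to the tensor algebra
  set f := algebraMap ℝ (ℂ ⊗[ℝ] ℂ) with hf
  have F1 := congrArg f h1
  have F2 := congrArg f h2
  have F3 := congrArg f h3
  have F4 := congrArg f h4
  simp only [map_add, map_sub, map_mul, map_pow, map_zero, map_ofNat] at F1 F2 F3 F4
  simp only [BPL]
  rw [← hxy]
  rw [show n - 1 + 1 = n by ring, show n - 1 + 2 = n + 1 by ring,
    show n - 1 + 3 = n + 2 by ring, show n + 1 + 1 = n + 2 by ring,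
    show n + 1 + 2 = n + 3 by ring, show n + 1 + 3 = n + 4 by ring]
  have msmul : ∀ (r : ℝ) (x : ℂ ⊗[ℝ] ℂ), r • x = f r * x :=
    fun r x => Algebra.smul_def r x
  simp only [msmul, map_mul, map_ofNat]
  linear_combination F1 + bi * F2 + bj * F3 + bi * bj * F4 +
    (f q0 * f q2 + (f q0 * f q4 + f q2 * f q2) * bj + f q2 * f q4 * (bj * bj) -
      2 * f q1 * f q3 * bj - f q1 ^ 2 - f q3 ^ 2 * (bj * bj)) * hx +
    (f q1 * f q3 + (f q1 * f q4 + f q2 * f q3) * bi - f q2 * f q4 -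
      2 * f q2 * f q3 * bi - f q2 ^ 2 + f q3 ^ 2) * hy
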